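/- Let k be a field of characteristic p > 0, n ≥ 1, and let B, Ψ be n×n matrices over k[[z]] such that D_B^p = 0 and Ψ′ = Ψ·B − B·Ψ. Then there exist an invertible n×n matrix U over k[[z]] and an n×n matrix Ψ₀ over k[[z]] such that U′ + B·U = 0, Ψ₀′ = 0 (every entry of Ψ₀ has zero derivative), and Ψ = U·Ψ₀·U⁻¹. (This is the local content of the equations (phe): a connection with vanishing p-curvature together with a horizontal F-Higgs field descends along the Frobenius to a Higgs field; it is the local heart of the inverse of the correspondence 𝔠 in the paper's main theorem.) -/

import Mathlib

open PowerSeries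

/-- The formal derivative `d/dz` on `k⟦z⟧`. -/
noncomputable def pd (k : Type*) [CommRing k] (f : PowerSeries k) : PowerSeries k :=
  PowerSeries.derivative k f

/-- Entrywise formal derivative of a matrix over `k⟦z⟧`. -/
noncomputable def matD (k : Type*) [CommRing k] {n : ℕ}
    (B : Matrix (Fin n) (Fin n) (PowerSeries k)) : Matrix (Fin n) (Fin n) (PowerSeries k) :=
  fun i j => pd k (B i j)

/-- The connection operator `D_B = d/dz + B` acting on `k⟦z⟧ⁿ`: `D_B(v) = v′ + B·v`. -/
noncomputable def connOp (k : Type*) [CommRing k] {n : ℕ}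
    (B : Matrix (Fin n) (Fin n) (PowerSeries k)) :
    (Fin n → PowerSeries k) → (Fin n → PowerSeries k) :=
  fun v => (fun i => pd k (v i)) + B.mulVec v

section Aux

variable {k : Type*} [CommRing k] {n : ℕ}

lemma pd_mul (f g : PowerSeries k) : pd k (f * g) = pd k f * g + f * pd k g := by
  show PowerSeries.derivative k (f * g) = _
  rw [Derivation.leibniz]
  simp only [smul_eq_mul, pd]
  ring

lemma pd_one : pd k (1 : PowerSeries k) = 0 := by
  show PowerSeries.derivative k 1 = 0
  exact Derivation.map_one_eq_zero _

lemma matD_mul (A C : Matrix (Fin n) (Fin n) (PowerSeries k)) :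
    matD k (A * C) = matD k A * C + A * matD k C := by
  funext i j
  show pd k (∑ l, A i l * C l j) = (∑ l, pd k (A i l) * C l j) + ∑ l, A i l * pd k (C l j)
  rw [show pd k (∑ l, A i l * C l j) = ∑ l, pd k (A i l * C l j) from
    map_sum (PowerSeries.derivative k).toLinearMap _ _, ← Finset.sum_add_distrib]
  exact Finset.sum_congr rfl fun l _ => pd_mul _ _

lemma matD_one : matD k (1 : Matrix (Fin n) (Fin n) (PowerSeries k)) = 0 := by
  funext i j
  show pd k ((1 : Matrix (Fin n) (Fin n) (PowerSeries k)) i j) = 0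
  rw [Matrix.one_apply]
  split_ifs
  · exact pd_one
  · exact map_zero (PowerSeries.derivative k).toLinearMap

lemma connOp_add (B : Matrix (Fin n) (Fin n) (PowerSeries k)) (v w : Fin n → PowerSeries k) :
    connOp k B (v + w) = connOp k B v + connOp k B w := by
  funext i
  simp only [connOp, Pi.add_apply, Matrix.mulVec_add]
  have : pd k (v i + w i) = pd k (v i) + pd k (w i) := map_add _ _ _
  rw [this]
  ring

lemma connOp_smul (B : Matrix (Fin n) (Fin n) (PowerSeries k)) (f : PowerSeries k)
    (v : Fin n → PowerSeries k) :
    connOp k B (f • v) = pd k f • v + f • connOp k B v := by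
  funext i
  simp only [connOp, Pi.add_apply, Pi.smul_apply, smul_eq_mul, Matrix.mulVec_smul]
  rw [pd_mul]
  ring

end Aux

/-- A connection `d/dz + B` with vanishing `p`-curvature together with a horizontal
`F`-Higgs field `Ψ` descends along the Frobenius: there are an invertible `U` with
`U′ + B·U = 0` and a constant matrix `Ψ₀` (entrywise zero derivative) with
`Ψ = U·Ψ₀·U⁻¹`. -/
theorem higgs_descent_local (k : Type*) [Field k] (p : ℕ) [Fact p.Prime] [CharP k p]
    (n : ℕ) (hn : 1 ≤ n) (B Ψ : Matrix (Fin n) (Fin n) (PowerSeries k))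
    (hB : ∀ v : Fin n → PowerSeries k, (connOp k B)^[p] v = 0)
    (hΨ : matD k Ψ = Ψ * B - B * Ψ) :
    ∃ (U Ψ₀ : Matrix (Fin n) (Fin n) (PowerSeries k)),
      IsUnit U.det ∧ matD k U + B * U = 0 ∧ matD k Ψ₀ = 0 ∧ Ψ = U * Ψ₀ * U⁻¹ := by
  have hp : p.Prime := Fact.out
  have hp1 : 1 ≤ p := hp.one_lt.le
  set D := connOp k B with hD
  -- the coefficients `(-z)^m/m!`
  set c : ℕ → PowerSeries k := fun m => C (R := k) ((-1) ^ m * ((m.factorial : k))⁻¹) * X ^ m with hc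
  have hfac : ∀ m : ℕ, m < p → ((m.factorial : k)) ≠ 0 := by
    intro m hm
    rw [Ne, CharP.cast_eq_zero_iff k p, hp.dvd_factorial]
    omega
  have hc0 : c 0 = 1 := by simp [hc]
  have hpdc : ∀ m : ℕ, m + 1 < p → pd k (c (m + 1)) = -c m := by
    intro m hm
    have h1 : pd k ((X : PowerSeries k) ^ (m + 1)) = C (R := k) ((m : k) + 1) * X ^ m := by
      show PowerSeries.derivative k (X ^ (m + 1)) = _
      rw [Derivation.leibniz_pow]
      simp only [Nat.add_sub_cancel, PowerSeries.derivative_X, smul_eq_mul, mul_one,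
        nsmul_eq_mul]
      congr 1
      rw [← map_natCast (C (R := k)) (m + 1)]
      push_cast
      ring
    rw [hc, pd_mul, h1]
    have h2 : pd k (C (R := k) ((-1) ^ (m + 1) * ((m + 1).factorial : k)⁻¹)) = 0 :=
      PowerSeries.derivative_C
    rw [h2, zero_mul, zero_add, ← mul_assoc, ← map_mul, ← neg_mul, ← map_neg]
    congr 1
    congr 1
    have hm1 : ((m : k) + 1) ≠ 0 := by
      intro h
      have : ((m + 1 : ℕ) : k) = 0 := by push_cast; exact h
      rw [CharP.cast_eq_zero_iff k p] at this
      have := Nat.le_of_dvd (Nat.succ_pos m) this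
      omega
    have hmf : ((m.factorial : k)) ≠ 0 := hfac m (by omega)
    have hfs : (((m + 1).factorial : k)) = ((m : k) + 1) * (m.factorial : k) := by
      rw [Nat.factorial_succ]; push_cast; ring
    rw [hfs, pow_succ]
    field_simp
  have Dadd : ∀ v w : Fin n → PowerSeries k, D (v + w) = D v + D w := connOp_add B
  have Dsmul : ∀ (f : PowerSeries k) (v : Fin n → PowerSeries k),
      D (f • v) = pd k f • v + f • D v := connOp_smul B
  -- horizontal sections: telescoping sum
  have key : ∀ N : ℕ, N + 1 ≤ p → ∀ v : Fin n → PowerSeries k,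
      D (∑ m ∈ Finset.range (N + 1), c m • D^[m] v) = c N • D^[N + 1] v := by
    intro N
    induction N with
    | zero =>
      intro _ v
      simp only [zero_add, Finset.sum_range_one, Function.iterate_zero, id_eq]
      rw [Dsmul, hc0, one_smul, Function.iterate_one, pd_one, zero_smul, zero_add, one_smul]
    | succ N ih =>
      intro hNp v
      rw [Finset.sum_range_succ, Dadd, ih (by omega) v, Dsmul,
        hpdc N (by omega), Function.iterate_succ_apply']
      have h1 : D (D^[N] v) = D^[N + 1] v := (Function.iterate_succ_apply' D N v).symm
      have h2 : D (D (D^[N] v)) = D^[N + 2] v := by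
        rw [h1]; exact (Function.iterate_succ_apply' D (N + 1) v).symm
      rw [h2, h1, show N + 1 + 1 = N + 2 from rfl]
      rw [neg_smul, add_neg_cancel_left]
  -- the fundamental solution matrix
  set col : Fin n → (Fin n → PowerSeries k) :=
    fun j => ∑ m ∈ Finset.range p, c m • D^[m] (Pi.single j (1 : PowerSeries k)) with hcol
  have hcolD : ∀ j, D (col j) = 0 := by
    intro j
    have := key (p - 1) (by omega) (Pi.single j (1 : PowerSeries k))
    rw [show p - 1 + 1 = p by omega] at this
    rw [hcol, this, hB, smul_zero]
  set U : Matrix (Fin n) (Fin n) (PowerSeries k) := Matrix.of fun i j => col j i with hUdef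
  have hU2 : matD k U + B * U = 0 := by
    funext i j
    have h := congrFun (hcolD j) i
    simp only [hD, connOp, Pi.add_apply, Pi.zero_apply] at h
    show pd k (U i j) + (B * U) i j = 0
    rw [show (B * U) i j = B.mulVec (col j) i by
      simp [Matrix.mul_apply, Matrix.mulVec, dotProduct, hUdef]]
    exact h
  -- constant coefficients
  have hconst : U.map (constantCoeff (R := k)) = 1 := by
    funext i j
    show constantCoeff (R := k) (col j i) = (1 : Matrix (Fin n) (Fin n) k) i j
    rw [hcol]
    simp only [Finset.sum_apply, Pi.smul_apply, smul_eq_mul, map_sum, map_mul]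
    rw [Finset.sum_eq_single 0]
    · simp only [hc0, Function.iterate_zero, id_eq, map_one, one_mul]
      rw [Matrix.one_apply, Pi.single_apply]
      split_ifs <;> simp_all
    · intro m _ hm
      have : constantCoeff (R := k) (c m) = 0 := by
        obtain ⟨l, rfl⟩ := Nat.exists_eq_succ_of_ne_zero hm
        simp [hc, pow_succ]
      rw [this, zero_mul]
    · intro h
      exact absurd (Finset.mem_range.mpr (by omega)) h
  have hUdet : IsUnit U.det := by
    rw [PowerSeries.isUnit_iff_constantCoeff]
    have : constantCoeff (R := k) U.det = (U.map (constantCoeff (R := k))).det := RingHom.map_det _ _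
    rw [this, hconst, Matrix.det_one]
    exact isUnit_one
  have hUinv1 : U * U⁻¹ = 1 := Matrix.mul_nonsing_inv U hUdet
  have hUinv2 : U⁻¹ * U = 1 := Matrix.nonsing_inv_mul U hUdet
  have hmatDU : matD k U = -(B * U) := by
    rw [eq_neg_iff_add_eq_zero]; exact hU2
  have hmatDUinv : matD k U⁻¹ = U⁻¹ * B := by
    have h0 : matD k (U⁻¹ * U) = 0 := by rw [hUinv2, matD_one]
    rw [matD_mul, hmatDU] at h0
    have h1 : matD k U⁻¹ * U = U⁻¹ * (B * U) := by
      have := congrArg (fun M => M + U⁻¹ * (B * U)) h0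
      simpa [mul_neg, add_assoc] using this
    calc matD k U⁻¹ = matD k U⁻¹ * U * U⁻¹ := by rw [mul_assoc, hUinv1, mul_one]
    _ = U⁻¹ * (B * U) * U⁻¹ := by rw [h1]
    _ = U⁻¹ * B := by rw [mul_assoc, mul_assoc, hUinv1, mul_one]
  refine ⟨U, U⁻¹ * Ψ * U, hUdet, hU2, ?_, ?_⟩
  · rw [matD_mul, matD_mul, hmatDUinv, hΨ, hmatDU]
    noncomm_ring
  · calc Ψ = (U * U⁻¹) * Ψ * (U * U⁻¹) := by rw [hUinv1]; rw [one_mul, mul_one]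
      _ = U * (U⁻¹ * Ψ * U) * U⁻¹ := by noncomm_ring
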